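/- arXiv:1608.01259 — 4 statements merged into one kernel-verified Lean document; each statement's English description precedes it below -/
import Mathlib

section
/- Let D be a domain in ℝ^N, N ≥ 2, and let u : D → [-∞, +∞) be Lebesgue measurable with u⁺ ∈ L¹_loc(D). If u satisfies u(x) ≤ K/(ν_N r^N) ∫_{B(x,r)} u dm_N for all B̄(x,r) ⊂ D for some constant K ≥ 1 (i.e., u is K-quasinearly subharmonic n.s.), then either u ≡ -∞ on D, or u is finite almost everywhere on D and u ∈ L¹_loc(D). -/
open MeasureTheory Metric
open scoped ENNReal

noncomputable section

/-- `ℝ^N` as Euclidean space. -/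
abbrev Euc (N : ℕ) := EuclideanSpace ℝ (Fin N)

/-- `ν_N`: the volume of the unit ball in `ℝ^N`. -/
noncomputable def unitBallVol (N : ℕ) : ℝ := (volume (ball (0 : Euc N) 1)).toReal

/-- Positive part of an extended real, valued in `ℝ≥0∞`. -/
noncomputable def epos (x : EReal) : ℝ≥0∞ := if x = ⊤ then ⊤ else ENNReal.ofReal x.toReal

/-- The extended-real valued Lebesgue integral of `u` over `s`
(well defined whenever the positive part is integrable). -/
noncomputable def esetInt {N : ℕ} (u : Euc N → EReal) (s : Set (Euc N)) : EReal :=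
  ((∫⁻ y in s, epos (u y)) : ℝ≥0∞) - ((∫⁻ y in s, epos (-(u y))) : ℝ≥0∞)

/-- The generalized sub-mean-value inequality
`u(x) ≤ K/(ν_N r^N) ∫_{B(x,r)} u dm_N` over all closed balls contained in `D`. -/
def SubMeanIneq {N : ℕ} (K : ℝ) (D : Set (Euc N)) (u : Euc N → EReal) : Prop :=
  ∀ x r, 0 < r → closedBall x r ⊆ D →
    u x ≤ ((K / (unitBallVol N * r ^ N) : ℝ) : EReal) * esetInt u (ball x r)

/-- `u` is `K`-quasinearly subharmonic n.s. (in the narrow sense) on `D`: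
`u` is measurable, `u⁺ ∈ L¹_loc(D)`, `u < +∞` and the sub-mean-value
inequality with constant `K` holds on all closed balls in `D`. -/
def QNSns {N : ℕ} (K : ℝ) (D : Set (Euc N)) (u : Euc N → EReal) : Prop :=
  1 ≤ K ∧ AEMeasurable u (volume.restrict D) ∧ (∀ x ∈ D, u x < ⊤) ∧
  LocallyIntegrableOn (fun y => ((u y) ⊔ 0).toReal) D volume ∧
  SubMeanIneq K D u

/-- The family of inequalities (for every `M ≥ 0`, applied to `u_M = max (u, -M) + M`)
defining `K`-quasinearly subharmonic functions. -/
def QNSIneqFull {N : ℕ} (K : ℝ) (D : Set (Euc N)) (u : Euc N → EReal) : Prop :=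
  ∀ M : ℝ, 0 ≤ M → ∀ x r, 0 < r → closedBall x r ⊆ D →
    (u x ⊔ ((-M : ℝ) : EReal)) + (M : EReal) ≤
      ((K / (unitBallVol N * r ^ N) : ℝ) : EReal) *
        ((∫⁻ y in ball x r, epos ((u y ⊔ ((-M : ℝ) : EReal)) + (M : EReal))) : ℝ≥0∞)

/-- `u` is `K`-quasinearly subharmonic on `D`. -/
def QNSfull {N : ℕ} (K : ℝ) (D : Set (Euc N)) (u : Euc N → EReal) : Prop :=
  1 ≤ K ∧ AEMeasurable u (volume.restrict D) ∧ (∀ x ∈ D, u x < ⊤) ∧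
  LocallyIntegrableOn (fun y => ((u y) ⊔ 0).toReal) D volume ∧
  QNSIneqFull K D u

/-- `u ∈ L¹_loc(D)` for an extended-real valued `u`. -/
def LocIntE {N : ℕ} (u : Euc N → EReal) (D : Set (Euc N)) : Prop :=
  ∀ k, k ⊆ D → IsCompact k → (∫⁻ y in k, epos (u y) + epos (-(u y))) < ⊤

/-- The sub-mean-value inequality for real-valued functions. -/
def SubMeanIneqR {N : ℕ} (K : ℝ) (D : Set (Euc N)) (u : Euc N → ℝ) : Prop :=
  ∀ x r, 0 < r → closedBall x r ⊆ D →
    u x ≤ (K / (unitBallVol N * r ^ N)) * ∫ y in ball x r, u y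

/-- The quasinearly subharmonicity inequalities (for every `M ≥ 0`,
applied to `u_M = max (u, -M) + M`) for real-valued functions. -/
def QNSIneqFullR {N : ℕ} (K : ℝ) (D : Set (Euc N)) (u : Euc N → ℝ) : Prop :=
  ∀ M : ℝ, 0 ≤ M → ∀ x r, 0 < r → closedBall x r ⊆ D →
    max (u x) (-M) + M ≤
      (K / (unitBallVol N * r ^ N)) * ∫ y in ball x r, (max (u y) (-M) + M)

/-- `u : D → [-∞, +∞)` is harmonic on `D`: it is finite (real-valued) on `D`,
continuous on `D`, and satisfies the mean value equality on all closed balls in `D`. -/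
def IsHarmonicOn {N : ℕ} (D : Set (Euc N)) (u : Euc N → EReal) : Prop :=
  (∀ x ∈ D, u x ≠ ⊥ ∧ u x ≠ ⊤) ∧ ContinuousOn (fun x => (u x).toReal) D ∧
  ∀ x r, 0 < r → closedBall x r ⊆ D →
    (u x).toReal = (1 / (unitBallVol N * r ^ N)) * ∫ y in ball x r, (u y).toReal

end

section AuxLemmas

open MeasureTheory Metric
open scoped ENNReal

lemma measurable_epos : Measurable epos := by
  unfold epos
  refine Measurable.ite ?_ measurable_const
    (ENNReal.measurable_ofReal.comp measurable_ereal_toReal)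
  simpa [Set.setOf_eq_eq_singleton] using
    (measurableSet_singleton (⊤ : EReal))

lemma epos_neg_bot : epos (-(⊥ : EReal)) = ⊤ := by
  simp [epos]

lemma epos_neg_eq_top_iff (x : EReal) : epos (-x) = ⊤ ↔ x = ⊥ := by
  induction x using EReal.rec with
  | bot => simp [epos]
  | coe a => simp [epos]
  | top => simp [epos]

lemma epos_eq_ofReal (x : EReal) (hx : x ≠ ⊤) :
    epos x = ENNReal.ofReal ((x ⊔ 0).toReal) := by
  induction x using EReal.rec with
  | bot => simp [epos]
  | coe a =>
    rcases le_total a 0 with h | h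
    · have h1 : ((a : EReal) ⊔ 0) = 0 := sup_eq_right.mpr (by exact_mod_cast h)
      simp [epos, h1, ENNReal.ofReal_of_nonpos h]
    · have h1 : ((a : EReal) ⊔ 0) = (a : EReal) := sup_eq_left.mpr (by exact_mod_cast h)
      simp [epos, h1]
  | top => exact absurd rfl hx

lemma unitBallVol_pos (N : ℕ) : 0 < unitBallVol N :=
  ENNReal.toReal_pos (measure_ball_pos volume (0 : Euc N) one_pos).ne'
    measure_ball_lt_top.ne

lemma lintegral_finset_biUnion_le {α : Type*} [MeasurableSpace α] (μ : Measure α)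
    {ι : Type*} (t : Finset ι) (s : ι → Set α) (f : α → ℝ≥0∞) :
    (∫⁻ y in ⋃ i ∈ t, s i, f y ∂μ) ≤ ∑ i ∈ t, ∫⁻ y in s i, f y ∂μ := by
  classical
  induction t using Finset.induction with
  | empty => simp
  | @insert a t ha ih =>
    rw [Finset.set_biUnion_insert, Finset.sum_insert ha]
    exact (lintegral_union_le _ _ _).trans (add_le_add le_rfl ih)

end AuxLemmas

/-- a K-quasinearly subharmonic n.s. function on a domain is
either identically `-∞` or finite a.e. and locally integrable. -/
theorem qnsns_botEverywhere_or_finiteAE_locInt {N : ℕ} (hN : 2 ≤ N)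
    (D : Set (Euc N)) (hDopen : IsOpen D) (hDconn : IsConnected D)
    (K : ℝ) (u : Euc N → EReal)
    (hu : QNSns K D u) :
    (∀ x ∈ D, u x = ⊥) ∨
      ((∀ᵐ x ∂(volume.restrict D), u x ≠ ⊥) ∧ LocIntE u D) := by
  classical
  obtain ⟨hK, hmeas, hfin, hloc, hsub⟩ := hu
  have hvol : 0 < unitBallVol N := unitBallVol_pos N
  -- finiteness of the positive part on compact subsets of D
  have hpos : ∀ k, k ⊆ D → IsCompact k → (∫⁻ y in k, epos (u y)) < ⊤ := by
    intro k hkD hk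
    have hI : IntegrableOn (fun y => ((u y) ⊔ 0).toReal) k volume :=
      hloc.integrableOn_compact_subset hkD hk
    have heq : (∫⁻ y in k, epos (u y))
        = ∫⁻ y in k, ENNReal.ofReal (((u y) ⊔ 0).toReal) :=
      setLIntegral_congr_fun hk.measurableSet
        (fun y hy => epos_eq_ofReal _ (hfin y (hkD hy)).ne)
    rw [heq]
    exact hI.lintegral_lt_top
  -- key: infinite negative part on an admissible ball forces u x = ⊥
  have key : ∀ x r, 0 < r → closedBall x r ⊆ D →
      (∫⁻ y in ball x r, epos (-(u y))) = ⊤ → u x = ⊥ := by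
    intro x r hr hcb hinf
    have heset : esetInt u (ball x r) = ⊥ := by
      rw [esetInt, hinf, EReal.coe_ennreal_top, EReal.sub_top]
    have hc : 0 < K / (unitBallVol N * r ^ N) :=
      div_pos (lt_of_lt_of_le one_pos hK) (mul_pos hvol (pow_pos hr N))
    have h := hsub x r hr hcb
    rw [heset, EReal.coe_mul_bot_of_pos hc] at h
    exact le_bot_iff.mp h
  -- the two open sets
  set T : Set (Euc N) := {x | x ∈ D ∧ ∀ r, 0 < r → closedBall x r ⊆ D →
      (∫⁻ y in ball x r, epos (-(u y))) = ⊤} with hTdef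
  set S : Set (Euc N) := {x | x ∈ D ∧ ∃ r, 0 < r ∧ closedBall x r ⊆ D ∧
      (∫⁻ y in ball x r, epos (-(u y))) < ⊤} with hSdef
  have hTopen : IsOpen T := by
    rw [Metric.isOpen_iff]
    rintro x ⟨hxD, hxP⟩
    obtain ⟨ε, hε, hball⟩ := Metric.isOpen_iff.mp hDopen x hxD
    set r := ε / 6 with hrdef
    have hr : 0 < r := by positivity
    have h3 : closedBall x (3 * r) ⊆ D := by
      intro y hy
      exact hball (lt_of_le_of_lt (mem_closedBall.mp hy) (by rw [hrdef]; linarith))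
    have hcb1 : closedBall x r ⊆ D :=
      (closedBall_subset_closedBall (by linarith)).trans h3
    have hbot : ∀ z ∈ ball x r, u z = ⊥ := by
      intro z hz
      have hzx : dist z x < r := mem_ball.mp hz
      have hcb2 : closedBall z (2 * r) ⊆ D := by
        refine (closedBall_subset_closedBall' ?_).trans h3
        linarith
      refine key z (2 * r) (by linarith) hcb2 ?_
      have hmono : ball x r ⊆ ball z (2 * r) := by
        refine ball_subset_ball' ?_
        rw [dist_comm]
        linarith
      exact eq_top_iff.mpr ((hxP r hr hcb1) ▸ lintegral_mono_set hmono)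
    refine ⟨r, hr, ?_⟩
    intro z hz
    have hzx : dist z x < r := mem_ball.mp hz
    refine ⟨hcb1 (ball_subset_closedBall hz), ?_⟩
    intro s hs hcbs
    set δ := min s (r - dist z x) with hδdef
    have hδ : 0 < δ := lt_min hs (by linarith)
    have hsub1 : ball z δ ⊆ ball x r := by
      refine (ball_subset_ball (min_le_right _ _)).trans (ball_subset_ball' ?_)
      linarith
    have hsub2 : ball z δ ⊆ ball z s := ball_subset_ball (min_le_left _ _)
    have hinf : (∫⁻ y in ball z δ, epos (-(u y))) = ⊤ := by
      have hcongr : (∫⁻ y in ball z δ, epos (-(u y)))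
          = ∫⁻ _ in ball z δ, (⊤ : ℝ≥0∞) :=
        setLIntegral_congr_fun measurableSet_ball
          (fun y hy => by
            rw [hbot y (hsub1 hy)]; exact epos_neg_bot)
      rw [hcongr, setLIntegral_const]
      exact ENNReal.top_mul (measure_ball_pos _ _ hδ).ne'
    exact eq_top_iff.mpr (hinf ▸ lintegral_mono_set hsub2)
  have hSopen : IsOpen S := by
    rw [Metric.isOpen_iff]
    rintro x ⟨hxD, r, hr, hcb, hlt⟩
    refine ⟨r, hr, ?_⟩
    intro z hz
    have hzx : dist z x < r := mem_ball.mp hz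
    refine ⟨hcb (ball_subset_closedBall hz), r - dist z x, by linarith, ?_, ?_⟩
    · refine (closedBall_subset_closedBall' ?_).trans hcb
      linarith
    · refine lt_of_le_of_lt (lintegral_mono_set ?_) hlt
      refine ball_subset_ball' ?_
      linarith
  have hcover : D ⊆ T ∪ S := by
    intro x hxD
    by_cases h : ∀ r, 0 < r → closedBall x r ⊆ D →
        (∫⁻ y in ball x r, epos (-(u y))) = ⊤
    · exact Or.inl ⟨hxD, h⟩
    · push_neg at h
      obtain ⟨r, hr, hcb, hne⟩ := h
      exact Or.inr ⟨hxD, r, hr, hcb, lt_top_iff_ne_top.mpr hne⟩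
  rcases Set.eq_empty_or_nonempty (D ∩ S) with hSemp | hSne
  · -- u ≡ ⊥
    left
    intro x hxD
    have hxT : x ∈ T := by
      rcases hcover hxD with h | h
      · exact h
      · exact absurd ⟨hxD, h⟩ (Set.eq_empty_iff_forall_notMem.mp hSemp x)
    obtain ⟨ε, hε, hball⟩ := Metric.isOpen_iff.mp hDopen x hxD
    have hcb : closedBall x (ε / 2) ⊆ D := by
      intro y hy
      exact hball (lt_of_le_of_lt (mem_closedBall.mp hy) (by linarith))
    exact key x (ε / 2) (by linarith) hcb (hxT.2 _ (by linarith) hcb)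
  · -- u ∈ L¹_loc and finite a.e.
    have hDS : D ⊆ S := by
      intro x hxD
      rcases hcover hxD with hxT | hxS
      · exfalso
        obtain ⟨y, hyD, hyS⟩ := hSne
        obtain ⟨z, hzD, hzT, hzS⟩ := hDconn.isPreconnected T S hTopen hSopen hcover
          ⟨x, hxD, hxT⟩ ⟨y, hyD, hyS⟩
        obtain ⟨r, hr, hcb, hlt⟩ := hzS.2
        exact absurd (hzT.2 r hr hcb) hlt.ne
      · exact hxS
    right
    have hmeasg : ∀ s : Set (Euc N), s ⊆ D →
        AEMeasurable (fun y => epos (-(u y))) (volume.restrict s) := by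
      intro s hs
      have hu' : AEMeasurable u (volume.restrict s) :=
        hmeas.mono_measure (Measure.restrict_mono hs le_rfl)
      exact (measurable_epos.comp (continuous_neg.measurable)).comp_aemeasurable hu'
    have hnull : ∀ x r, (∫⁻ y in ball x r, epos (-(u y))) < ⊤ → ball x r ⊆ D →
        volume ({y | u y = ⊥} ∩ ball x r) = 0 := by
      intro x r hlt hsubD
      have hae := ae_lt_top' (hmeasg _ hsubD) hlt.ne
      rw [← Measure.restrict_apply' measurableSet_ball]
      refine measure_mono_null ?_ (ae_iff.mp hae)
      intro y hy
      simp only [Set.mem_setOf_eq, not_lt, top_le_iff]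
      exact (epos_neg_eq_top_iff (u y)).mpr hy
    choose! rad hrad1 hrad2 hrad3 using fun (x : Euc N) (hx : x ∈ D) => (hDS hx).2
    constructor
    · -- a.e. finiteness
      obtain ⟨Tc, hTcCount, hTcEq⟩ :=
        TopologicalSpace.isOpen_iUnion_countable
          (fun x : D => ball (x : Euc N) (rad x)) (fun _ => isOpen_ball)
      have hDsub : D ⊆ ⋃ i ∈ Tc, ball (i : Euc N) (rad i) := by
        intro x hxD
        rw [hTcEq]
        exact Set.mem_iUnion.mpr ⟨⟨x, hxD⟩, mem_ball_self (hrad1 x hxD)⟩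
      have hbig : volume (⋃ i ∈ Tc, ({y | u y = ⊥} ∩ ball (i : Euc N) (rad i))) = 0 := by
        refine (measure_biUnion_null_iff hTcCount).mpr ?_
        intro i _
        exact hnull _ _ (hrad3 i i.2)
          ((ball_subset_closedBall).trans (hrad2 i i.2))
      have hDnull : volume ({y | u y = ⊥} ∩ D) = 0 := by
        refine measure_mono_null ?_ hbig
        intro y ⟨hy1, hy2⟩
        rcases Set.mem_iUnion₂.mp (hDsub hy2) with ⟨i, hi, hyi⟩
        exact Set.mem_iUnion₂.mpr ⟨i, hi, hy1, hyi⟩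
      rw [ae_iff, Measure.restrict_apply' hDopen.measurableSet]
      convert hDnull using 2
      ext y
      simp [not_not]
    · -- local integrability
      intro k hkD hk
      have haef : AEMeasurable (fun y => epos (u y)) (volume.restrict k) :=
        measurable_epos.comp_aemeasurable
          (hmeas.mono_measure (Measure.restrict_mono hkD le_rfl))
      have hsplit : (∫⁻ y in k, epos (u y) + epos (-(u y)))
          = (∫⁻ y in k, epos (u y)) + ∫⁻ y in k, epos (-(u y)) :=
        lintegral_add_left' haef _
      rw [hsplit]
      refine ENNReal.add_lt_top.mpr ⟨hpos k hkD hk, ?_⟩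
      have hcov : k ⊆ ⋃ x : k, ball (x : Euc N) (rad x) := by
        intro x hx
        exact Set.mem_iUnion.mpr ⟨⟨x, hx⟩, mem_ball_self (hrad1 x (hkD hx))⟩
      obtain ⟨t, ht⟩ := hk.elim_finite_subcover
        (fun x : k => ball (x : Euc N) (rad x)) (fun _ => isOpen_ball) hcov
      calc (∫⁻ y in k, epos (-(u y)))
          ≤ ∫⁻ y in ⋃ i ∈ t, ball (i : Euc N) (rad ↑i), epos (-(u y)) :=
            lintegral_mono_set ht
        _ ≤ ∑ i ∈ t, ∫⁻ y in ball (i : Euc N) (rad ↑i), epos (-(u y)) :=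
            lintegral_finset_biUnion_le _ _ _ _
        _ < ⊤ := ENNReal.sum_lt_top.mpr fun i _ => hrad3 (i : Euc N) (hkD i.2)
end

section
/- The function u : ℝ² → ℝ defined by u(x,y) = -1 when y < 0 and u(x,y) = 1 when y ≥ 0 is 2-quasinearly subharmonic, but it is not quasinearly subharmonic n.s. (i.e., there is no K ≥ 1 such that u(x) ≤ K/(ν_2 r²)∫_{B(x,r)} u dm_2 for all closed balls B̄(x,r) ⊂ ℝ²). -/
open MeasureTheory Metric
open scoped ENNReal

noncomputable section StepAux

/-- Reflection negating the second coordinate. -/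
noncomputable def reflY : Euc 2 ≃ₗᵢ[ℝ] Euc 2 :=
  LinearIsometryEquiv.piLpCongrRight 2
    (fun i : Fin 2 => if i = 1 then LinearIsometryEquiv.neg ℝ else LinearIsometryEquiv.refl ℝ ℝ)

lemma reflY_apply_one (p : Euc 2) : reflY p 1 = -(p 1) := by
  simp [reflY, LinearIsometryEquiv.piLpCongrRight_apply]

lemma reflY_apply_zero (p : Euc 2) : reflY p 0 = p 0 := by
  simp [reflY, LinearIsometryEquiv.piLpCongrRight_apply]

lemma dist_reflY_le (p x : Euc 2) (hp : p 1 ≤ 0) (hx : 0 ≤ x 1) :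
    dist (reflY p) x ≤ dist p x := by
  rw [EuclideanSpace.dist_eq, EuclideanSpace.dist_eq]
  apply Real.sqrt_le_sqrt
  simp only [Fin.sum_univ_two, reflY_apply_zero, reflY_apply_one, Real.dist_eq]
  have h1 : |-(p 1) - x 1| ^ 2 ≤ |p 1 - x 1| ^ 2 := by
    rw [sq_abs, sq_abs]; nlinarith [mul_nonneg (neg_nonneg.2 hp) hx]
  linarith

lemma cont_eval : Continuous fun p : Euc 2 => p 1 := (EuclideanSpace.proj (1 : Fin 2) : Euc 2 →L[ℝ] ℝ).continuous

lemma meas_eval : Measurable fun p : Euc 2 => p 1 := cont_eval.measurable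

lemma measT : MeasurableSet {p : Euc 2 | p 1 < 0} :=
  measurableSet_lt meas_eval measurable_const

lemma meas_half (x : Euc 2) (hx : 0 ≤ x 1) (r : ℝ) :
    volume (ball x r ∩ {p : Euc 2 | p 1 < 0}) ≤
      volume (ball x r ∩ {p : Euc 2 | 0 ≤ p 1}) := by
  have hsub : ball x r ∩ {p : Euc 2 | p 1 < 0} ⊆
      ⇑reflY ⁻¹' (ball x r ∩ {p : Euc 2 | 0 ≤ p 1}) := by
    rintro p ⟨hpb, hp⟩
    simp only [Set.mem_setOf_eq] at hp
    refine ⟨?_, ?_⟩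
    · rw [mem_ball] at hpb ⊢
      exact lt_of_le_of_lt (dist_reflY_le p x hp.le hx) hpb
    · simp only [Set.mem_setOf_eq, reflY_apply_one]; linarith
  have hms : NullMeasurableSet (ball x r ∩ {p : Euc 2 | 0 ≤ p 1}) volume :=
    (measurableSet_ball.inter (measurableSet_le measurable_const meas_eval)).nullMeasurableSet
  calc volume (ball x r ∩ {p : Euc 2 | p 1 < 0})
      ≤ volume (⇑reflY ⁻¹' (ball x r ∩ {p : Euc 2 | 0 ≤ p 1})) := measure_mono hsub
    _ = volume (ball x r ∩ {p : Euc 2 | 0 ≤ p 1}) :=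
        reflY.measurePreserving.measure_preimage hms

lemma hplane_null : volume {p : Euc 2 | p 1 = 0} = 0 := by
  have h0 : ∀ c : ℝ, ∀ p : Euc 2, (c • p) 1 = c * p 1 := fun c p => rfl
  set s : Submodule ℝ (Euc 2) :=
    { carrier := {p : Euc 2 | p 1 = 0}
      add_mem' := by
        intro a b ha hb
        simp only [Set.mem_setOf_eq] at *
        show a 1 + b 1 = 0
        rw [ha, hb, add_zero]
      zero_mem' := rfl
      smul_mem' := by
        intro c a ha
        simp only [Set.mem_setOf_eq] at *
        show c * a 1 = 0
        rw [ha, mul_zero] } with hs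
  have hne : s ≠ ⊤ := by
    intro h
    have : (EuclideanSpace.single 1 (1:ℝ) : Euc 2) ∈ s := h ▸ Submodule.mem_top
    simp only [hs, Submodule.mem_mk, AddSubmonoid.mem_mk, AddSubsemigroup.mem_mk,
      Set.mem_setOf_eq, EuclideanSpace.single_apply] at this
    norm_num at this
    exact absurd (show (EuclideanSpace.single 1 (1:ℝ) : Euc 2) 1 = 0 from this) (by simp)
  exact MeasureTheory.Measure.addHaar_submodule volume s hne

lemma meas_eq_center (r : ℝ) :
    volume (ball (0 : Euc 2) r ∩ {p : Euc 2 | 0 ≤ p 1}) ≤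
      volume (ball (0 : Euc 2) r ∩ {p : Euc 2 | p 1 < 0}) := by
  have hsub : ball (0 : Euc 2) r ∩ {p : Euc 2 | 0 < p 1} ⊆
      ⇑reflY ⁻¹' (ball (0 : Euc 2) r ∩ {p : Euc 2 | p 1 < 0}) := by
    rintro p ⟨hpb, hp⟩
    simp only [Set.mem_setOf_eq] at hp
    refine ⟨?_, ?_⟩
    · rw [mem_ball] at hpb ⊢
      have : reflY (0 : Euc 2) = 0 := reflY.map_zero
      calc dist (reflY p) 0 = dist (reflY p) (reflY 0) := by rw [this]
        _ = dist p 0 := reflY.dist_map p 0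
        _ < r := hpb
    · simp only [Set.mem_setOf_eq, reflY_apply_one]; linarith
  have hms : NullMeasurableSet (ball (0:Euc 2) r ∩ {p : Euc 2 | p 1 < 0}) volume :=
    (measurableSet_ball.inter measT).nullMeasurableSet
  have h1 : volume (ball (0 : Euc 2) r ∩ {p : Euc 2 | 0 < p 1}) ≤
      volume (ball (0 : Euc 2) r ∩ {p : Euc 2 | p 1 < 0}) := by
    calc volume (ball (0:Euc 2) r ∩ {p : Euc 2 | 0 < p 1})
        ≤ volume (⇑reflY ⁻¹' (ball (0:Euc 2) r ∩ {p : Euc 2 | p 1 < 0})) := measure_mono hsub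
      _ = _ := reflY.measurePreserving.measure_preimage hms
  have h2 : ball (0 : Euc 2) r ∩ {p : Euc 2 | 0 ≤ p 1} ⊆
      (ball (0 : Euc 2) r ∩ {p : Euc 2 | 0 < p 1}) ∪ {p : Euc 2 | p 1 = 0} := by
    rintro p ⟨hpb, hp⟩
    simp only [Set.mem_setOf_eq] at hp
    rcases eq_or_lt_of_le hp with h | h
    · exact Or.inr h.symm
    · exact Or.inl ⟨hpb, h⟩
  calc volume (ball (0:Euc 2) r ∩ {p : Euc 2 | 0 ≤ p 1})
      ≤ volume ((ball (0:Euc 2) r ∩ {p : Euc 2 | 0 < p 1}) ∪ {p : Euc 2 | p 1 = 0}) :=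
        measure_mono h2
    _ ≤ volume (ball (0:Euc 2) r ∩ {p : Euc 2 | 0 < p 1}) + volume {p : Euc 2 | p 1 = 0} :=
        measure_union_le _ _
    _ = volume (ball (0:Euc 2) r ∩ {p : Euc 2 | 0 < p 1}) := by rw [hplane_null, add_zero]
    _ ≤ _ := h1

lemma integral_step (x : Euc 2) (r : ℝ) (a b : ℝ) :
    (∫ y in ball x r, (if y 1 < 0 then a else b)) =
      a * (volume (ball x r ∩ {p : Euc 2 | p 1 < 0})).toReal +
      b * (volume (ball x r ∩ {p : Euc 2 | 0 ≤ p 1})).toReal := by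
  have hcompl : {p : Euc 2 | p 1 < 0}ᶜ = {p : Euc 2 | 0 ≤ p 1} := by
    ext p; simp [not_lt]
  have hdisj : Disjoint (ball x r ∩ {p : Euc 2 | p 1 < 0})
      (ball x r ∩ {p : Euc 2 | p 1 < 0}ᶜ) :=
    (Disjoint.mono Set.inter_subset_right Set.inter_subset_right disjoint_compl_right)
  have hms2 : MeasurableSet (ball x r ∩ {p : Euc 2 | p 1 < 0}ᶜ) :=
    measurableSet_ball.inter measT.compl
  have hms1 : MeasurableSet (ball x r ∩ {p : Euc 2 | p 1 < 0}) :=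
    measurableSet_ball.inter measT
  have hi1 : IntegrableOn (fun y : Euc 2 => if y 1 < 0 then a else b)
      (ball x r ∩ {p : Euc 2 | p 1 < 0}) volume := by
    have : volume (ball x r ∩ {p : Euc 2 | p 1 < 0}) < ⊤ :=
      lt_of_le_of_lt (measure_mono Set.inter_subset_left) measure_ball_lt_top
    have hc : IntegrableOn (fun _ : Euc 2 => a)
        (ball x r ∩ {p : Euc 2 | p 1 < 0}) volume := integrableOn_const this.ne
    exact hc.congr_fun (fun y hy => (if_pos hy.2).symm) hms1
  have hi2 : IntegrableOn (fun y : Euc 2 => if y 1 < 0 then a else b)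
      (ball x r ∩ {p : Euc 2 | p 1 < 0}ᶜ) volume := by
    have : volume (ball x r ∩ {p : Euc 2 | p 1 < 0}ᶜ) < ⊤ :=
      lt_of_le_of_lt (measure_mono Set.inter_subset_left) measure_ball_lt_top
    have hc : IntegrableOn (fun _ : Euc 2 => b)
        (ball x r ∩ {p : Euc 2 | p 1 < 0}ᶜ) volume := integrableOn_const this.ne
    exact hc.congr_fun (fun y hy => (if_neg hy.2).symm) hms2
  have hu : ball x r = (ball x r ∩ {p : Euc 2 | p 1 < 0}) ∪
      (ball x r ∩ {p : Euc 2 | p 1 < 0}ᶜ) := (Set.inter_union_compl _ _).symm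
  conv_lhs => rw [hu]
  rw [setIntegral_union hdisj hms2 hi1 hi2]
  have e1 : (∫ y in ball x r ∩ {p : Euc 2 | p 1 < 0}, (if y 1 < 0 then a else b)) =
      a * (volume (ball x r ∩ {p : Euc 2 | p 1 < 0})).toReal := by
    have h := setIntegral_congr_fun (μ := volume)
      (f := fun y : Euc 2 => if y 1 < 0 then a else b) (g := fun _ => a)
      hms1 (fun y hy => if_pos hy.2)
    rw [h, setIntegral_const, smul_eq_mul, mul_comm]
    rfl
  have e2 : (∫ y in ball x r ∩ {p : Euc 2 | p 1 < 0}ᶜ, (if y 1 < 0 then a else b)) =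
      b * (volume (ball x r ∩ {p : Euc 2 | p 1 < 0}ᶜ)).toReal := by
    have h := setIntegral_congr_fun (μ := volume)
      (f := fun y : Euc 2 => if y 1 < 0 then a else b) (g := fun _ => b)
      hms2 (fun y hy => if_neg hy.2)
    rw [h, setIntegral_const, smul_eq_mul, mul_comm]
    rfl
  rw [e1, e2, hcompl]

end StepAux

noncomputable section MainAux

lemma vol_ball_toReal (x : Euc 2) (r : ℝ) (hr : 0 < r) :
    (volume (ball x r)).toReal = unitBallVol 2 * r ^ 2 := by
  rw [MeasureTheory.Measure.addHaar_ball volume x hr.le, ENNReal.toReal_mul,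
    ENNReal.toReal_ofReal (by positivity), finrank_euclideanSpace_fin]
  rw [unitBallVol, mul_comm]

lemma vol_sum (x : Euc 2) (r : ℝ) :
    (volume (ball x r ∩ {p : Euc 2 | p 1 < 0})).toReal +
      (volume (ball x r ∩ {p : Euc 2 | 0 ≤ p 1})).toReal = (volume (ball x r)).toReal := by
  have hcompl : {p : Euc 2 | p 1 < 0}ᶜ = {p : Euc 2 | 0 ≤ p 1} := by ext p; simp [not_lt]
  have h := measure_inter_add_diff (μ := volume) (ball x r) (t := {p : Euc 2 | p 1 < 0}) measT
  rw [Set.diff_eq, hcompl] at h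
  have h1 : volume (ball x r ∩ {p : Euc 2 | p 1 < 0}) ≠ ⊤ :=
    (lt_of_le_of_lt (measure_mono Set.inter_subset_left) measure_ball_lt_top).ne
  have h2 : volume (ball x r ∩ {p : Euc 2 | 0 ≤ p 1}) ≠ ⊤ :=
    (lt_of_le_of_lt (measure_mono Set.inter_subset_left) measure_ball_lt_top).ne
  rw [← h, ENNReal.toReal_add h1 h2]


end MainAux

/-- the sign-like step function on `ℝ²` (value `-1` for `y < 0`,
value `1` for `y ≥ 0`) is 2-quasinearly subharmonic but not quasinearly
subharmonic n.s. -/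
theorem stepFunction_twoQns_not_qnsns :
    QNSIneqFullR 2 (Set.univ : Set (Euc 2))
      (fun p => if p 1 < 0 then (-1 : ℝ) else 1) ∧
    ¬ ∃ K : ℝ, 1 ≤ K ∧ SubMeanIneqR K (Set.univ : Set (Euc 2))
      (fun p => if p 1 < 0 then (-1 : ℝ) else 1) := by
  constructor
  · intro M hM x r hr _
    set vm : ℝ := max (-1 : ℝ) (-M) + M with hvm
    set vp : ℝ := max (1 : ℝ) (-M) + M with hvp
    have hvm0 : 0 ≤ vm := by
      have := le_max_right (-1 : ℝ) (-M); simp only [hvm]; linarith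
    have hvmvp : vm ≤ vp := by
      have : max (-1 : ℝ) (-M) ≤ max 1 (-M) := max_le_max (by norm_num) le_rfl
      simp only [hvm, hvp]; linarith
    have h1 : (∫ y in ball x r, (max ((fun p : Euc 2 => if p 1 < 0 then (-1:ℝ) else 1) y) (-M) + M))
        = ∫ y in ball x r, (if y 1 < 0 then vm else vp) := by
      apply MeasureTheory.integral_congr_ae
      filter_upwards with y
      by_cases h : y 1 < 0 <;> simp [h, hvm, hvp]
    rw [h1, integral_step x r vm vp]
    set B : ℝ := (volume (ball x r ∩ {p : Euc 2 | p 1 < 0})).toReal with hB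
    set A : ℝ := (volume (ball x r ∩ {p : Euc 2 | 0 ≤ p 1})).toReal with hA
    have hBA : B + A = unitBallVol 2 * r ^ 2 := by
      rw [hB, hA, vol_sum, vol_ball_toReal x r hr]
    have hV0 : (0:ℝ) < unitBallVol 2 * r ^ 2 := by
      rw [← vol_ball_toReal x r hr]
      exact ENNReal.toReal_pos (measure_ball_pos volume x hr).ne' measure_ball_lt_top.ne
    have hA0 : 0 ≤ A := ENNReal.toReal_nonneg
    have hB0 : 0 ≤ B := ENNReal.toReal_nonneg
    rw [div_mul_eq_mul_div, le_div_iff₀ hV0]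
    by_cases hx : x 1 < 0
    · simp only [if_pos hx]
      nlinarith [mul_nonneg hvm0 hB0, mul_nonneg hvm0 hA0,
        mul_le_mul_of_nonneg_right hvmvp hA0]
    · simp only [if_neg hx]
      have hBleA : B ≤ A := by
        rw [hB, hA]
        refine ENNReal.toReal_mono ?_ (meas_half x (not_lt.1 hx) r)
        exact (lt_of_le_of_lt (measure_mono Set.inter_subset_left) measure_ball_lt_top).ne
      have hvp0 : 0 ≤ vp := le_trans hvm0 hvmvp
      nlinarith [mul_nonneg hvm0 hB0, mul_le_mul_of_nonneg_left hBleA hvp0]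
  · rintro ⟨K, hK, hsm⟩
    have h0 : (0 : Euc 2) 1 = 0 := rfl
    have hineq := hsm 0 1 one_pos (Set.subset_univ _)
    have hAB : volume (ball (0:Euc 2) 1 ∩ {p : Euc 2 | p 1 < 0}) =
        volume (ball (0:Euc 2) 1 ∩ {p : Euc 2 | 0 ≤ p 1}) :=
      le_antisymm (meas_half 0 h0.ge 1) (meas_eq_center 1)
    have hI : (∫ y in ball (0:Euc 2) 1,
        (fun p : Euc 2 => if p 1 < 0 then (-1:ℝ) else 1) y) = 0 := by
      rw [show (fun y : Euc 2 => (fun p : Euc 2 => if p 1 < 0 then (-1:ℝ) else 1) y)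
        = fun y : Euc 2 => if y 1 < 0 then (-1:ℝ) else 1 from rfl]
      rw [integral_step 0 1 (-1) 1, hAB]
      ring
    rw [hI, mul_zero] at hineq
    simp only [h0] at hineq
    norm_num at hineq
end

section
/- Every Harnack function on a domain D ⊆ ℝ^N, N ≥ 2, is quasinearly subharmonic n.s.: if u : D → [0, +∞) is continuous and there exist λ ∈ (0,1) and C_λ ≥ 1 such that max_{z ∈ B̄(x, λr)} u(z) ≤ C_λ min_{z ∈ B̄(x, λr)} u(z) whenever B(x,r) ⊆ D, then there exists K ≥ 1 such that u(x) ≤ K/(ν_N r^N) ∫_{B(x,r)} u dm_N for all closed balls B̄(x,r) ⊂ D. -/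
open MeasureTheory Metric
open scoped ENNReal

/-- every Harnack function is quasinearly subharmonic n.s. -/
theorem harnackFunction_isQnsns {N : ℕ} (hN : 2 ≤ N)
    (D : Set (Euc N)) (hDopen : IsOpen D) (hDconn : IsConnected D)
    (u : Euc N → ℝ) (hcont : ContinuousOn u D) (hpos : ∀ x ∈ D, 0 ≤ u x)
    (l C : ℝ) (hl0 : 0 < l) (hl1 : l < 1) (hC : 1 ≤ C)
    (harnack : ∀ x r, 0 < r → ball x r ⊆ D →
      ∀ z ∈ closedBall x (l * r), ∀ w ∈ closedBall x (l * r), u z ≤ C * u w) :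
    ∃ K : ℝ, 1 ≤ K ∧ SubMeanIneqR K D u := by
  have hC0 : (0:ℝ) < C := lt_of_lt_of_le one_pos hC
  have hlN : (0:ℝ) < l ^ N := pow_pos hl0 N
  have hlN1 : l ^ N ≤ 1 := pow_le_one₀ hl0.le hl1.le
  have hnu : 0 < unitBallVol N := by
    unfold unitBallVol
    have h1 : (0:ℝ≥0∞) < volume (ball (0 : Euc N) 1) := measure_ball_pos _ _ one_pos
    have h2 : volume (ball (0 : Euc N) 1) < ⊤ := measure_ball_lt_top
    exact ENNReal.toReal_pos h1.ne' h2.ne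
  refine ⟨C / l ^ N, ?_, ?_⟩
  · rw [le_div_iff₀ hlN]; nlinarith
  intro x r hr hsub
  have hball : ball x r ⊆ D := ball_subset_closedBall.trans hsub
  have hlr : 0 < l * r := mul_pos hl0 hr
  have hsmall : closedBall x (l * r) ⊆ ball x r := closedBall_subset_ball (by nlinarith)
  have hint : IntegrableOn u (ball x r) :=
    ((hcont.mono hsub).integrableOn_compact (isCompact_closedBall x r)).mono_set
      ball_subset_closedBall
  have hintS : IntegrableOn u (ball x (l * r)) :=
    hint.mono_set (hsmall.trans' ball_subset_closedBall)
  have hle : ∀ y ∈ closedBall x (l * r), u x / C ≤ u y := by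
    intro y hy
    have h := harnack x r hr hball x (mem_closedBall_self hlr.le) y hy
    rw [div_le_iff₀ hC0]; linarith [h, mul_comm C (u y)]
  haveI : Nonempty (Fin N) := ⟨⟨0, by omega⟩⟩
  have hvol : (volume (ball x (l * r))).toReal = unitBallVol N * (l * r) ^ N := by
    rw [Measure.addHaar_ball _ _ hlr.le, ENNReal.toReal_mul,
      ENNReal.toReal_ofReal (by positivity)]
    simp [unitBallVol, finrank_euclideanSpace_fin, mul_comm]
  have hconst : u x / C * (unitBallVol N * (l * r) ^ N) ≤ ∫ y in ball x (l * r), u y := by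
    have h1 : ∫ _ in ball x (l * r), (u x / C) ≤ ∫ y in ball x (l * r), u y := by
      refine setIntegral_mono_on (integrableOn_const measure_ball_lt_top.ne)
        hintS measurableSet_ball ?_
      intro y hy
      exact hle y (ball_subset_closedBall hy)
    rwa [setIntegral_const, smul_eq_mul, measureReal_def, hvol, mul_comm] at h1
  have hmono : ∫ y in ball x (l * r), u y ≤ ∫ y in ball x r, u y := by
    refine setIntegral_mono_set hint ?_ ?_
    · refine (ae_restrict_iff' measurableSet_ball).2 (ae_of_all _ fun y hy => ?_)
      exact hpos y (hball hy)
    · exact HasSubset.Subset.eventuallyLE (ball_subset_ball (by nlinarith))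
  have hfin : u x / C * (unitBallVol N * (l * r) ^ N) ≤ ∫ y in ball x r, u y :=
    hconst.trans hmono
  have hrN : (0:ℝ) < r ^ N := pow_pos hr N
  rw [div_div, div_mul_eq_mul_div, le_div_iff₀ (by positivity)]
  rw [div_mul_eq_mul_div, div_le_iff₀ hC0] at hfin
  have hp : u x * (l ^ N * (unitBallVol N * r ^ N)) = u x * (unitBallVol N * (l * r) ^ N) := by
    rw [mul_pow]; ring
  linarith [hfin]
end

section
/- There exists a strictly positive function u : ℝ^N → (0, +∞), N ≥ 2, such that both u and -u are quasinearly subharmonic n.s. but u is not harmonic: namely u(0) = 2 and u(x) = 1 for x ≠ 0; then u is 2-quasinearly subharmonic n.s., -u is 1-quasinearly subharmonic n.s. (i.e., nearly subharmonic), and u is discontinuous at 0, hence not harmonic. -/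
open MeasureTheory Metric
open scoped ENNReal

/-- there is a strictly positive function `u` on `ℝ^N` such that
`u` is 2-quasinearly subharmonic n.s. and `-u` is 1-quasinearly subharmonic
n.s. (nearly subharmonic), yet `u` is not harmonic: `u(0) = 2`, `u(x) = 1`
for `x ≠ 0`. -/
theorem exists_positive_qnsns_both_not_harmonic {N : ℕ} (hN : 2 ≤ N) :
    ∃ u : Euc N → ℝ,
      (∀ x, 0 < u x) ∧
      u 0 = 2 ∧ (∀ x : Euc N, x ≠ 0 → u x = 1) ∧
      Measurable u ∧
      SubMeanIneqR 2 (Set.univ : Set (Euc N)) u ∧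
      SubMeanIneqR 1 (Set.univ : Set (Euc N)) (fun x => -(u x)) ∧
      ¬ (∀ (x : Euc N) (r : ℝ), 0 < r →
          u x = (1 / (unitBallVol N * r ^ N)) * ∫ y in ball x r, u y) := by
  classical
  set ν := unitBallVol N with hν
  have hNpos : 0 < N := by omega
  haveI : Nonempty (Fin N) := ⟨⟨0, hNpos⟩⟩
  haveI : Nontrivial (Euc N) := inferInstance
  have hνpos : 0 < ν := by
    have h1 : (0:ℝ≥0∞) < volume (ball (0 : Euc N) 1) := measure_ball_pos _ _ one_pos
    have h2 : volume (ball (0 : Euc N) 1) < ⊤ := measure_ball_lt_top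
    exact ENNReal.toReal_pos h1.ne' h2.ne
  have hvol : ∀ (x : Euc N) (r : ℝ), 0 < r →
      (volume (ball x r)).toReal = ν * r ^ N := by
    intro x r hr
    rw [Measure.addHaar_ball volume x hr.le]
    rw [ENNReal.toReal_mul, ENNReal.toReal_ofReal (by positivity)]
    rw [finrank_euclideanSpace_fin]
    simp [hν, unitBallVol, mul_comm]
  refine ⟨fun x => if x = 0 then 2 else 1, ?_, by simp, fun x hx => by simp [hx], ?_, ?_, ?_, ?_⟩
  · intro x; by_cases h : x = 0 <;> simp [h]
  · exact Measurable.ite (measurableSet_singleton 0) measurable_const measurable_const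
  · intro x r hr _
    have hint : ∫ y in ball x r, (if y = 0 then (2:ℝ) else 1) = ν * r ^ N := by
      have hae : (fun y : Euc N => if y = 0 then (2:ℝ) else 1) =ᵐ[volume.restrict (ball x r)] (fun _ => 1) := by
        refine Filter.Eventually.filter_mono (Measure.restrict_le_self.absolutelyContinuous.ae_le) ?_
        filter_upwards [measure_eq_zero_iff_ae_notMem.mp (measure_singleton (0 : Euc N))] with y hy
        simp [Set.mem_singleton_iff] at hy
        simp [hy]
      rw [integral_congr_ae hae, setIntegral_const, smul_eq_mul, mul_one, measureReal_def, hvol x r hr]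
    rw [hint, div_mul_cancel₀]
    · by_cases h : x = 0 <;> simp [h]
    · positivity
  · intro x r hr _
    have hint : ∫ y in ball x r, -(if y = 0 then (2:ℝ) else 1) = -(ν * r ^ N) := by
      have hae : (fun y : Euc N => -(if y = 0 then (2:ℝ) else 1)) =ᵐ[volume.restrict (ball x r)] (fun _ => (-1:ℝ)) := by
        refine Filter.Eventually.filter_mono (Measure.restrict_le_self.absolutelyContinuous.ae_le) ?_
        filter_upwards [measure_eq_zero_iff_ae_notMem.mp (measure_singleton (0 : Euc N))] with y hy
        simp [Set.mem_singleton_iff] at hy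
        simp [hy]
      rw [integral_congr_ae hae, setIntegral_const, smul_eq_mul, measureReal_def, hvol x r hr]
      ring
    rw [hint]
    have : (1 / (ν * r ^ N)) * -(ν * r ^ N) = -1 := by
      field_simp
    rw [this]
    by_cases h : x = 0 <;> simp [h]
  · intro H
    have h1 := H 0 1 one_pos
    have hint : ∫ y in ball (0 : Euc N) 1, (if y = 0 then (2:ℝ) else 1) = ν * 1 ^ N := by
      have hae : (fun y : Euc N => if y = 0 then (2:ℝ) else 1) =ᵐ[volume.restrict (ball (0:Euc N) 1)] (fun _ => 1) := by
        refine Filter.Eventually.filter_mono (Measure.restrict_le_self.absolutelyContinuous.ae_le) ?_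
        filter_upwards [measure_eq_zero_iff_ae_notMem.mp (measure_singleton (0 : Euc N))] with y hy
        simp [Set.mem_singleton_iff] at hy
        simp [hy]
      rw [integral_congr_ae hae, setIntegral_const, smul_eq_mul, mul_one, measureReal_def, hvol _ _ one_pos]
    rw [hint] at h1
    have : (1 / (ν * 1 ^ N)) * (ν * 1 ^ N) = 1 := by
      rw [one_div_mul_cancel]; positivity
    rw [this] at h1
    norm_num at h1
end
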